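/- Let f be the characteristic function of a 2-intersecting family F ⊆ M_{2n}, and suppose C(f) ≤ n − 2. If m ∈ F, then F is r-covered for r = C(f,m) − 1. -/

import Mathlib

/-- A perfect matching of the complete graph on `[N]`, viewed as a fixed-point-free
involution of `Fin N`. -/
def PM (N : ℕ) := {m : Fin N → Fin N // (∀ i, m i ≠ i) ∧ ∀ i, m (m i) = i}

instance (N : ℕ) : Fintype (PM N) := Subtype.fintype _
instance (N : ℕ) : DecidableEq (PM N) := fun a b =>
  decidable_of_iff (a.1 = b.1) Subtype.ext_iff.symm

/-- The edge set of a perfect matching. -/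
def PM.edges {N : ℕ} (m : PM N) : Finset (Sym2 (Fin N)) :=
  Finset.univ.image fun i => s(i, m.1 i)

/-- Two perfect matchings are 2-intersecting: they share at least two edges. -/
def PMTwoIntersecting {N : ℕ} (m1 m2 : PM N) : Prop :=
  2 ≤ (PM.edges m1 ∩ PM.edges m2).card

/-- A family of perfect matchings is 2-intersecting. -/
def PMTwoIntersectingFamily {N : ℕ} (F : Finset (PM N)) : Prop :=
  ∀ m1 ∈ F, ∀ m2 ∈ F, PMTwoIntersecting m1 m2

/-- A valid certificate: a set of pairwise disjoint non-loop unordered pairs. -/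
def ValidEdgeSet {N : ℕ} (C : Finset (Sym2 (Fin N))) : Prop :=
  (∀ e ∈ C, ¬ e.IsDiag) ∧
    ∀ e ∈ C, ∀ f ∈ C, e ≠ f → ∀ a : Fin N, a ∈ e → a ∉ f

/-- `m` satisfies the certificate `C`: every pair of `C` is an edge of `m`. -/
def PMSatisfies {N : ℕ} (m : PM N) (C : Finset (Sym2 (Fin N))) : Prop :=
  ∀ e ∈ C, e ∈ PM.edges m

/-- `C` is a certificate for `m` with respect to `f`. -/
def IsPMCertFor {N : ℕ} (f : PM N → ℝ) (m : PM N) (C : Finset (Sym2 (Fin N))) : Prop :=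
  ValidEdgeSet C ∧ PMSatisfies m C ∧ ∀ m' : PM N, PMSatisfies m' C → f m' = f m

/-- The certificate complexity `C(f, m)`: the minimum size of a certificate for `m`. -/
noncomputable def pmCertComplexityAt {N : ℕ} (f : PM N → ℝ) (m : PM N) : ℕ :=
  sInf {k | ∃ C : Finset (Sym2 (Fin N)), C.card = k ∧ IsPMCertFor f m C}

/-- The certificate complexity `C(f)`: the maximum of `C(f, m)` over all `m`. -/
noncomputable def pmCertComplexity {N : ℕ} (f : PM N → ℝ) : ℕ :=
  Finset.univ.sup fun m : PM N => pmCertComplexityAt f m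

/-- The monomial `m ↦ ∏_{{i,j} ∈ S} x_{ij}(m)`. -/
def pmMonomial {N : ℕ} (S : Finset (Sym2 (Fin N))) : PM N → ℝ :=
  fun m => ∏ e ∈ S, if e ∈ PM.edges m then (1 : ℝ) else 0

/-- `f : M_N → ℝ` has degree at most `d`: it is a real linear combination of monomials
`∏_{{i,j} ∈ S} x_{ij}` with `|S| ≤ d`. -/
def PMDegLE (N d : ℕ) (f : PM N → ℝ) : Prop :=
  f ∈ Submodule.span ℝ {g : PM N → ℝ |
    ∃ S : Finset (Sym2 (Fin N)), S.card ≤ d ∧ g = pmMonomial S}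

/-- The degree of `f : M_N → ℝ`. -/
noncomputable def pmDeg (N : ℕ) (f : PM N → ℝ) : ℕ :=
  sInf {d | PMDegLE N d f}

/-- The coset `U_{i↔j} = {m : m(i) = j}`, for `p = (i, j)`. -/
def PMCoset {N : ℕ} (p : Fin N × Fin N) : Set (PM N) :=
  {m : PM N | m.1 p.1 = p.2}

/-- The coset of all matchings containing the (non-loop) unordered pair `e`. -/
def PMCosetE {N : ℕ} (e : Sym2 (Fin N)) : Set (PM N) :=
  {m : PM N | e ∈ PM.edges m}

/-- `F` is `r`-covered: it is contained in a union of `r` pairwise compatible cosets. -/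
def PMRCovered {N : ℕ} (r : ℕ) (F : Finset (PM N)) : Prop :=
  ∃ P : Finset (Sym2 (Fin N)), P.card = r ∧ (∀ e ∈ P, ¬ e.IsDiag) ∧
    (∀ e ∈ P, ∀ e' ∈ P, (PMCosetE e ∩ PMCosetE e').Nonempty) ∧
    ↑F ⊆ ⋃ e ∈ P, PMCosetE e

/-- A `t`-coset of `M_N`: the set of all perfect matchings containing `t` fixed pairwise
disjoint edges. -/
def IsPMTCoset {N : ℕ} (t : ℕ) (S : Set (PM N)) : Prop :=
  ∃ C : Finset (Sym2 (Fin N)), C.card = t ∧ ValidEdgeSet C ∧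
    S = {m : PM N | ∀ e ∈ C, e ∈ PM.edges m}

lemma PM.mem_edges {N : ℕ} (m : PM N) (e : Sym2 (Fin N)) :
    e ∈ PM.edges m ↔ ∃ i, e = s(i, m.1 i) := by
  simp [PM.edges, eq_comm]

lemma PM.edge_mk_mem {N : ℕ} (m : PM N) (i : Fin N) : s(i, m.1 i) ∈ PM.edges m :=
  (PM.mem_edges m _).mpr ⟨i, rfl⟩

lemma PM.apply_eq_of_edge_mem {N : ℕ} (m m' : PM N) (i : Fin N)
    (h : s(i, m.1 i) ∈ PM.edges m') : m'.1 i = m.1 i := by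
  obtain ⟨j, hj⟩ := (PM.mem_edges m' _).mp h
  rw [Sym2.eq_iff] at hj
  rcases hj with ⟨rfl, h2⟩ | ⟨h1, h2⟩
  · exact h2.symm
  · subst h2; exact (congrArg m'.1 h1).trans (m'.2.2 _)

lemma PM.fiber_eq {N : ℕ} (m : PM N) (j : Fin N) :
    (Finset.univ.filter fun x : Fin N => s(x, m.1 x) = s(j, m.1 j)) = {j, m.1 j} := by
  ext x
  simp only [Finset.mem_filter, Finset.mem_univ, true_and, Finset.mem_insert,
    Finset.mem_singleton, Sym2.eq_iff]
  constructor
  · rintro (⟨rfl, h2⟩ | ⟨h1, h2⟩)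
    · left; rfl
    · right; exact h1
  · rintro (rfl | rfl)
    · left; exact ⟨rfl, rfl⟩
    · right; exact ⟨rfl, m.2.2 j⟩

lemma PM.card_filter {N : ℕ} (m : PM N) (C : Finset (Sym2 (Fin N)))
    (hC : ∀ e ∈ C, e ∈ PM.edges m) :
    (Finset.univ.filter fun x => s(x, m.1 x) ∈ C).card = 2 * C.card := by
  rw [Finset.card_eq_sum_card_fiberwise (f := fun x => s(x, m.1 x)) (t := C)
    (s := Finset.univ.filter fun x => s(x, m.1 x) ∈ C)
    (fun x hx => (Finset.mem_filter.mp (Finset.mem_coe.mp hx)).2)]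
  rw [Finset.sum_congr rfl (g := fun _ => 2) (fun e he => ?_), Finset.sum_const,
    smul_eq_mul, mul_comm]
  obtain ⟨j, hj⟩ := (PM.mem_edges m e).mp (hC e he)
  have : ((Finset.univ.filter fun x => s(x, m.1 x) ∈ C).filter
      fun x => s(x, m.1 x) = e) = {j, m.1 j} := by
    rw [Finset.filter_filter]
    rw [← PM.fiber_eq m j]
    apply Finset.filter_congr
    intro x _
    subst hj
    constructor
    · rintro ⟨-, h⟩; exact h
    · intro h; exact ⟨by rw [h]; exact he, h⟩
  rw [this, Finset.card_pair (Ne.symm (m.2.1 j))]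

lemma PM.two_mul_card_edges {N : ℕ} (m : PM N) : 2 * (PM.edges m).card = N := by
  have h1 := PM.card_filter m (PM.edges m) (fun e he => he)
  have h2 : (Finset.univ.filter fun x : Fin N => s(x, m.1 x) ∈ PM.edges m) = Finset.univ :=
    Finset.filter_true_of_mem (fun x _ => PM.edge_mk_mem m x)
  rw [h2, Finset.card_univ, Fintype.card_fin] at h1
  omega

lemma exists_good_pairing {N : ℕ} (p : Fin N → Fin N) (hp : ∀ x, p (p x) = x) :
    ∀ (k : ℕ) (R : Finset (Fin N)), R.card = k → Even k →
      (k = 2 → ∀ x ∈ R, p x = x ∨ p x ∉ R) →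
      ∃ h : Fin N → Fin N, ∀ x ∈ R, h x ∈ R ∧ h x ≠ x ∧ h x ≠ p x ∧ h (h x) = x := by
  intro k
  induction k using Nat.strong_induction_on with
  | _ k IH =>
    intro R hcard heven hk2
    rcases Nat.eq_zero_or_pos k with h0 | hpos
    · subst h0
      refine ⟨id, fun x hx => absurd hx ?_⟩
      simp [Finset.card_eq_zero.mp hcard]
    by_cases hk2' : k = 2
    · subst hk2'
      obtain ⟨a, b, hab, hR⟩ := Finset.card_eq_two.mp hcard
      refine ⟨Equiv.swap a b, fun x hx => ?_⟩
      rw [hR] at hx hk2 ⊢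
      simp only [Finset.mem_insert, Finset.mem_singleton] at hx
      rcases hx with rfl | rfl
      · refine ⟨by simp, by simp [hab.symm, Equiv.swap_apply_left], ?_, by simp⟩
        rcases hk2 rfl x (by simp) with hpx | hpx
        · simp only [Equiv.swap_apply_left, hpx]; exact hab.symm
        · simp only [Equiv.swap_apply_left]
          intro hb; rw [← hb] at hpx; simp at hpx
      · refine ⟨by simp, by simp [hab, Equiv.swap_apply_right], ?_, by simp⟩
        rcases hk2 rfl x (by simp) with hpx | hpx
        · simp only [Equiv.swap_apply_right, hpx]; exact hab
        · simp only [Equiv.swap_apply_right]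
          intro ha; rw [← ha] at hpx; simp at hpx
    -- k ≥ 4
    have hk4 : 4 ≤ k := by rcases heven with ⟨t, rfl⟩; omega
    obtain ⟨a, ha⟩ := Finset.card_pos.mp (by omega : 0 < R.card)
    have hScard : 1 ≤ (R \ {a, p a}).card := by
      have h1 := Finset.le_card_sdiff ({a, p a}) R
      have h2 : ({a, p a} : Finset (Fin N)).card ≤ 2 :=
        (Finset.card_insert_le _ _).trans (by simp)
      omega
    -- choose b
    have hbex : ∃ b ∈ R \ {a, p a}, (∃ x ∈ R \ {a, p a}, p x ≠ x ∧ p x ∈ R) →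
        (p b ≠ b ∧ p b ∈ R) := by
      by_cases hcase : ∃ x ∈ R \ {a, p a}, p x ≠ x ∧ p x ∈ R
      · obtain ⟨b, hb1, hb2⟩ := hcase
        exact ⟨b, hb1, fun _ => hb2⟩
      · obtain ⟨b, hb⟩ := Finset.card_pos.mp (by omega : 0 < (R \ {a, p a}).card)
        exact ⟨b, hb, fun h => absurd h hcase⟩
    obtain ⟨b, hbS, hbprop⟩ := hbex
    have hbR : b ∈ R := (Finset.mem_sdiff.mp hbS).1
    have hba : b ≠ a := by
      have := (Finset.mem_sdiff.mp hbS).2; simp at this; tauto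
    have hbpa : b ≠ p a := by
      have := (Finset.mem_sdiff.mp hbS).2; simp at this; tauto
    have hpba : p b ≠ a := fun h => hbpa (by rw [← h, hp])
    set R' := R \ {a, b} with hR'
    have habsub : ({a, b} : Finset (Fin N)) ⊆ R := by
      intro x hx; simp at hx; rcases hx with rfl | rfl <;> assumption
    have hcard' : R'.card = k - 2 := by
      rw [hR', Finset.card_sdiff_of_subset habsub, Finset.card_pair (Ne.symm hba), hcard]
    have heven' : Even (k - 2) := by rcases heven with ⟨t, rfl⟩; exact ⟨t - 1, by omega⟩
    have hcond' : k - 2 = 2 → ∀ x ∈ R', p x = x ∨ p x ∉ R' := by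
      intro hk22 x hx
      by_contra hcon
      push_neg at hcon
      obtain ⟨hpx_ne, hpxR'⟩ := hcon
      have hxR : x ∈ R := (Finset.mem_sdiff.mp hx).1
      have hxa : x ≠ a := by have := (Finset.mem_sdiff.mp hx).2; simp at this; tauto
      have hxb : x ≠ b := by have := (Finset.mem_sdiff.mp hx).2; simp at this; tauto
      have hxpa : x ≠ p a := by
        intro h
        have : p x = a := by rw [h, hp]
        rw [this] at hpxR'
        exact (Finset.mem_sdiff.mp hpxR').2 (by simp)
      have hxS : x ∈ R \ {a, p a} := Finset.mem_sdiff.mpr ⟨hxR, by simp [hxa, hxpa]⟩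
      have hpxR : p x ∈ R := (Finset.mem_sdiff.mp hpxR').1
      obtain ⟨hpb_ne, hpbR⟩ := hbprop ⟨x, hxS, hpx_ne, hpxR⟩
      -- p b ∈ R' since p b ≠ a, p b ≠ b
      have hpbR' : p b ∈ R' := Finset.mem_sdiff.mpr ⟨hpbR, by simp [hpba, hpb_ne]⟩
      -- R' has card 2 and contains x, p x distinct, so R' = {x, p x}
      have hsub : ({x, p x} : Finset (Fin N)) ⊆ R' := by
        intro y hy; simp at hy; rcases hy with rfl | rfl <;> assumption
      have : R' = {x, p x} := (Finset.eq_of_subset_of_card_le hsub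
        (by rw [hcard', hk22, Finset.card_pair (Ne.symm hpx_ne)])).symm
      rw [this] at hpbR'
      simp at hpbR'
      rcases hpbR' with h | h
      · have hbpx : b = p x := by rw [← hp b, h]
        have : b ∈ R' := by rw [this]; simp [hbpx]
        exact (Finset.mem_sdiff.mp this).2 (by simp)
      · have hbx : b = x := by rw [← hp b, h, hp]
        exact hxb hbx.symm
    obtain ⟨h', hh'⟩ := IH (k - 2) (by omega) R' hcard' heven' hcond'
    refine ⟨fun y => if y = a then b else if y = b then a else h' y, fun x hx => ?_⟩
    dsimp only
    by_cases hxa : x = a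
    · rw [hxa, if_pos rfl, if_neg hba, if_pos rfl]
      exact ⟨hbR, hba.symm ∘ Eq.symm ∘ (hxa ▸ ·), hxa ▸ hbpa, rfl⟩
    by_cases hxb : x = b
    · rw [hxb, if_neg hba, if_pos rfl, if_pos rfl]
      exact ⟨ha, fun h => hba (hxb ▸ h.symm), fun h => hpba h.symm, rfl⟩
    · have hxR' : x ∈ R' := Finset.mem_sdiff.mpr ⟨hx, by simp [hxa, hxb]⟩
      obtain ⟨h1, h2, h3, h4⟩ := hh' x hxR'
      have hha : h' x ≠ a := by
        intro h; rw [h] at h1; exact (Finset.mem_sdiff.mp h1).2 (by simp)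
      have hhb : h' x ≠ b := by
        intro h; rw [h] at h1; exact (Finset.mem_sdiff.mp h1).2 (by simp)
      rw [if_neg hxa, if_neg hxb, if_neg hha, if_neg hhb]
      exact ⟨(Finset.mem_sdiff.mp h1).1, h2, h3, h4⟩

lemma PM.exists_extension {N : ℕ} (m m' : PM N) (C : Finset (Sym2 (Fin N)))
    (hCm : ∀ e ∈ C, e ∈ PM.edges m) (hbig : 2 * C.card + 4 ≤ N) (hNeven : Even N) :
    ∃ m'' : PM N, (∀ e ∈ C, e ∈ PM.edges m'') ∧
      PM.edges m'' ∩ PM.edges m' ⊆ C := by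
  classical
  set R := Finset.univ.filter (fun x : Fin N => s(x, m.1 x) ∉ C) with hRdef
  have hVcard := PM.card_filter m C hCm
  have hsplit := Finset.card_filter_add_card_filter_not (s := (Finset.univ : Finset (Fin N)))
      (p := fun x : Fin N => s(x, m.1 x) ∈ C)
  rw [Finset.card_univ, Fintype.card_fin] at hsplit
  have hRcard : R.card = N - 2 * C.card := by
    rw [hRdef]; omega
  have hReven : Even R.card := by
    obtain ⟨t, ht⟩ := hNeven
    exact ⟨t - C.card, by omega⟩
  obtain ⟨h, hh⟩ := exists_good_pairing m'.1 m'.2.2 R.card R rfl hReven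
    (fun h2 => absurd h2 (by omega))
  have hmemR : ∀ x : Fin N, x ∈ R ↔ s(x, m.1 x) ∉ C := by
    intro x; simp [hRdef]
  refine ⟨⟨fun x => if s(x, m.1 x) ∈ C then m.1 x else h x, ?_, ?_⟩, ?_, ?_⟩
  · intro x
    by_cases hx : s(x, m.1 x) ∈ C
    · simpa [hx] using m.2.1 x
    · have := (hh x ((hmemR x).mpr hx)).2.1
      simpa [hx] using this
  · intro x
    by_cases hx : s(x, m.1 x) ∈ C
    · have h1 : s(m.1 x, m.1 (m.1 x)) ∈ C := by
        rw [m.2.2, Sym2.eq_swap]; exact hx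
      simp only [if_pos hx, if_pos h1]
      exact m.2.2 x
    · have hxR : x ∈ R := (hmemR x).mpr hx
      obtain ⟨h1, -, -, h4⟩ := hh x hxR
      have h2 : s(h x, m.1 (h x)) ∉ C := (hmemR _).mp h1
      simp only [if_neg hx, if_neg h2]
      exact h4
  · intro e he
    obtain ⟨j, hj⟩ := (PM.mem_edges m e).mp (hCm e he)
    have hjC : s(j, m.1 j) ∈ C := hj ▸ he
    have : (if s(j, m.1 j) ∈ C then m.1 j else h j) = m.1 j := if_pos hjC
    refine (PM.mem_edges _ e).mpr ?_
    exact ⟨j, by simp only [this]; exact hj⟩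
  · intro e he
    obtain ⟨he'', he'⟩ := Finset.mem_inter.mp he
    obtain ⟨i, hi⟩ := (PM.mem_edges _ e).mp he''
    by_cases hiC : s(i, m.1 i) ∈ C
    · simp only [if_pos hiC] at hi
      exact hi ▸ hiC
    · simp only [if_neg hiC] at hi
      have hiR : i ∈ R := (hmemR i).mpr hiC
      obtain ⟨-, -, h3, -⟩ := hh i hiR
      obtain ⟨j, hj⟩ := (PM.mem_edges m' e).mp he'
      rw [hi] at hj
      rw [Sym2.eq_iff] at hj
      exfalso
      rcases hj with ⟨rfl, h2⟩ | ⟨h1, h2⟩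
      · exact h3 h2
      · apply h3
        subst h2
        exact ((congrArg m'.1 h1).trans (m'.2.2 _)).symm

lemma cert_edges {N : ℕ} (f : PM N → ℝ) (m : PM N) : IsPMCertFor f m (PM.edges m) := by
  refine ⟨⟨?_, ?_⟩, fun e he => he, ?_⟩
  · intro e he
    obtain ⟨i, rfl⟩ := (PM.mem_edges m e).mp he
    rw [Sym2.isDiag_iff_proj_eq]
    exact (m.2.1 i).symm
  · intro e he e' he' hne a hae hae'
    obtain ⟨i, rfl⟩ := (PM.mem_edges m e).mp he
    obtain ⟨j, rfl⟩ := (PM.mem_edges m e').mp he'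
    rw [Sym2.mem_iff] at hae hae'
    apply hne
    rcases hae with rfl | rfl <;> rcases hae' with h | h
    · rw [h]
    · rw [h, m.2.2, Sym2.eq_swap]
    · rw [← h, m.2.2, Sym2.eq_swap]
    · have hij : i = j := by rw [← m.2.2 i, h, m.2.2]
      rw [hij]
  · intro m' hm'
    have : m' = m := Subtype.ext (funext fun i =>
      PM.apply_eq_of_edge_mem m m' i (hm' _ (PM.edge_mk_mem m i)))
    rw [this]

/-- If `f` is the characteristic function of a 2-intersecting family
`F ⊆ M_{2n}` with `C(f) ≤ n - 2`, and `m ∈ F`, then `F` is `(C(f,m) - 1)`-covered. -/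
theorem pm_covering_lemma
    (n : ℕ) (F : Finset (PM (2 * n)))
    (hF : PMTwoIntersectingFamily F)
    (f : PM (2 * n) → ℝ)
    (hf : ∀ m, f m = if m ∈ F then 1 else 0)
    (hC : pmCertComplexity f ≤ n - 2)
    (m : PM (2 * n)) (hm : m ∈ F) :
    PMRCovered (pmCertComplexityAt f m - 1) F := by
  classical
  have hne : {k | ∃ C : Finset (Sym2 (Fin (2*n))), C.card = k ∧ IsPMCertFor f m C}.Nonempty :=
    ⟨(PM.edges m).card, PM.edges m, rfl, cert_edges f m⟩
  have hmem : pmCertComplexityAt f m ∈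
      {k | ∃ C : Finset (Sym2 (Fin (2*n))), C.card = k ∧ IsPMCertFor f m C} :=
    Nat.sInf_mem hne
  obtain ⟨C₀, hC₀card, hC₀valid, hC₀sat, hC₀cert⟩ := hmem
  have hcle : pmCertComplexityAt f m ≤ n - 2 :=
    le_trans (Finset.le_sup (Finset.mem_univ m)) hC
  have hC₀m : ∀ e ∈ C₀, e ∈ PM.edges m := hC₀sat
  have hn2 : 2 ≤ n := by
    have h1 := hF m hm m hm
    rw [PMTwoIntersecting, Finset.inter_self] at h1
    have h2 := PM.two_mul_card_edges m
    omega
  have hbig : 2 * C₀.card + 4 ≤ 2 * n := by omega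
  have key : ∀ m' ∈ F, 2 ≤ (C₀ ∩ PM.edges m').card := by
    intro m' hm'
    by_contra hlt
    push_neg at hlt
    obtain ⟨m'', hsat, hsub⟩ := PM.exists_extension m m' C₀ hC₀m hbig ⟨n, by ring⟩
    have hfm'' := hC₀cert m'' hsat
    rw [hf, hf, if_pos hm] at hfm''
    have hm''F : m'' ∈ F := by
      by_contra hne'
      rw [if_neg hne'] at hfm''
      norm_num at hfm''
    have h2 := hF m'' hm''F m' hm'
    rw [PMTwoIntersecting] at h2
    have h3 : PM.edges m'' ∩ PM.edges m' ⊆ C₀ ∩ PM.edges m' := fun e he =>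
      Finset.mem_inter.mpr ⟨hsub he, (Finset.mem_inter.mp he).2⟩
    have h4 := Finset.card_le_card h3
    omega
  have hc2 : 2 ≤ pmCertComplexityAt f m := by
    have h1 := key m hm
    have h2 : C₀ ∩ PM.edges m = C₀ := Finset.inter_eq_left.mpr hC₀m
    rw [h2] at h1
    omega
  obtain ⟨e₀, he₀⟩ := Finset.card_pos.mp (show 0 < C₀.card by omega)
  refine ⟨C₀.erase e₀, ?_, ?_, ?_, ?_⟩
  · rw [Finset.card_erase_of_mem he₀, hC₀card]
  · exact fun e he => hC₀valid.1 e (Finset.mem_of_mem_erase he)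
  · intro e he e' he'
    exact ⟨m, hC₀sat e (Finset.mem_of_mem_erase he), hC₀sat e' (Finset.mem_of_mem_erase he')⟩
  · intro m' hm'
    have hm'F : m' ∈ F := hm'
    obtain ⟨e, he, hee₀⟩ := Finset.exists_mem_ne
      (show 1 < (C₀ ∩ PM.edges m').card from lt_of_lt_of_le one_lt_two (key m' hm'F)) e₀
    exact Set.mem_iUnion₂.mpr ⟨e, Finset.mem_erase.mpr ⟨hee₀, (Finset.mem_inter.mp he).1⟩,
      (Finset.mem_inter.mp he).2⟩
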